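/- Let ω be a semi-selforthogonal subcategory of a triangulated category T. Then the class of ω-Gorenstein objects intersected with the smallest triangulated subcategory generated by add ω equals add ω: G_ω ∩ ⟨add ω⟩ = add ω. -/

import Mathlib

open CategoryTheory Category Limits Pretriangulated

universe v u

namespace RelSing

variable {C : Type u} [Category.{v} C] [Preadditive C] [HasZeroObject C]
  [HasShift C ℤ] [∀ n : ℤ, (shiftFunctor C n).Additive] [Pretriangulated C]

/-- `ω` is semi-selforthogonal (presilting): `Hom(M, M'[i]) = 0` for `M, M' ∈ ω`, `i > 0`. -/
def SemiSelfOrth (ω : Set C) : Prop :=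
  ∀ M ∈ ω, ∀ M' ∈ ω, ∀ i : ℤ, 0 < i → ∀ f : M ⟶ M'⟦i⟧, f = 0

/-- `add ω`: closure of `ω` under zero objects, finite direct sums (expressed via
biproduct data) and direct summands (retracts). -/
inductive AddCat (ω : Set C) : C → Prop
  | of {X : C} (hX : X ∈ ω) : AddCat ω X
  | zero {X : C} (hX : IsZero X) : AddCat ω X
  | sum {X Y Z : C} (i₁ : X ⟶ Z) (i₂ : Y ⟶ Z) (p₁ : Z ⟶ X) (p₂ : Z ⟶ Y)
      (h₁ : i₁ ≫ p₁ = 𝟙 X) (h₂ : i₂ ≫ p₂ = 𝟙 Y) (h₁₂ : i₁ ≫ p₂ = 0) (h₂₁ : i₂ ≫ p₁ = 0)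
      (hZ : p₁ ≫ i₁ + p₂ ≫ i₂ = 𝟙 Z) (hX : AddCat ω X) (hY : AddCat ω Y) : AddCat ω Z
  | retract {X Y : C} (i : X ⟶ Y) (r : Y ⟶ X) (hir : i ≫ r = 𝟙 X) (hY : AddCat ω Y) :
      AddCat ω X

/-- The left orthogonal `⊥ω`. -/
def leftPerp (ω : Set C) : Set C :=
  {N | ∀ M ∈ ω, ∀ i : ℤ, 0 < i → ∀ f : N ⟶ M⟦i⟧, f = 0}

/-- The right orthogonal `ω⊥`. -/
def rightPerp (ω : Set C) : Set C :=
  {N | ∀ M ∈ ω, ∀ i : ℤ, 0 < i → ∀ f : M ⟶ N⟦i⟧, f = 0}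

/-- The Auslander class `X_ω`: objects `T₀` with triangles `T_i → M_i → T_{i+1} → T_i[1]`
for all `i ≥ 0`, `M_i ∈ add ω`, `T_i ∈ ⊥ω`. -/
def Auslander (ω : Set C) : Set C :=
  {X | ∃ (T : ℕ → C) (M : ℕ → C) (f : ∀ i, T i ⟶ M i) (g : ∀ i, M i ⟶ T (i + 1))
      (h : ∀ i, T (i + 1) ⟶ (T i)⟦(1 : ℤ)⟧),
    T 0 = X ∧ (∀ i, Triangle.mk (f i) (g i) (h i) ∈ distTriang C) ∧
      (∀ i, AddCat ω (M i)) ∧ (∀ i, T i ∈ leftPerp ω)}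

/-- The co-Auslander class `ωX`: objects `T₀` with triangles `T_{i+1} → M_i → T_i → T_{i+1}[1]`
for all `i ≥ 0`, `M_i ∈ add ω`, `T_i ∈ ω⊥`. -/
def coAuslander (ω : Set C) : Set C :=
  {X | ∃ (T : ℕ → C) (M : ℕ → C) (f : ∀ i, T (i + 1) ⟶ M i) (g : ∀ i, M i ⟶ T i)
      (h : ∀ i, T i ⟶ (T (i + 1))⟦(1 : ℤ)⟧),
    T 0 = X ∧ (∀ i, Triangle.mk (f i) (g i) (h i) ∈ distTriang C) ∧
      (∀ i, AddCat ω (M i)) ∧ (∀ i, T i ∈ rightPerp ω)}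

/-- `check S` (`S̬`): objects `X₀` with triangles `X_i → C_i → X_{i+1} → X_i[1]` for
`0 ≤ i ≤ r`, `C_i ∈ S`, `X_{r+1} = 0`. -/
def CheckClass (S : Set C) : Set C :=
  {X | ∃ (r : ℕ) (T : ℕ → C) (M : ℕ → C) (f : ∀ i, T i ⟶ M i) (g : ∀ i, M i ⟶ T (i + 1))
      (h : ∀ i, T (i + 1) ⟶ (T i)⟦(1 : ℤ)⟧),
    T 0 = X ∧ IsZero (T (r + 1)) ∧ (∀ i ≤ r, Triangle.mk (f i) (g i) (h i) ∈ distTriang C) ∧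
      (∀ i ≤ r, M i ∈ S)}

/-- `hat S` (`Ŝ`): objects `X₀` with triangles `X_{i+1} → C_i → X_i → X_{i+1}[1]` for
`0 ≤ i ≤ r`, `C_i ∈ S`, `X_{r+1} = 0`. -/
def HatClass (S : Set C) : Set C :=
  {X | ∃ (r : ℕ) (T : ℕ → C) (M : ℕ → C) (f : ∀ i, T (i + 1) ⟶ M i) (g : ∀ i, M i ⟶ T i)
      (h : ∀ i, T i ⟶ (T (i + 1))⟦(1 : ℤ)⟧),
    T 0 = X ∧ IsZero (T (r + 1)) ∧ (∀ i ≤ r, Triangle.mk (f i) (g i) (h i) ∈ distTriang C) ∧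
      (∀ i ≤ r, M i ∈ S)}

/-- A (strictly full) triangulated subcategory, as a predicate on sets of objects. -/
structure IsTriangulatedSub (S : Set C) : Prop where
  zero : ∀ X : C, IsZero X → X ∈ S
  iso : ∀ {X Y : C}, (X ≅ Y) → X ∈ S → Y ∈ S
  shift : ∀ X ∈ S, ∀ n : ℤ, X⟦n⟧ ∈ S
  ext₂ : ∀ T ∈ distTriang C, T.obj₁ ∈ S → T.obj₃ ∈ S → T.obj₂ ∈ S

/-- `⟨S⟩`: the smallest triangulated subcategory containing `S`. -/
def genTriang (S : Set C) : Set C :=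
  ⋂₀ {U : Set C | S ⊆ U ∧ IsTriangulatedSub U}

/-- `S[+] = {X | X ≅ C[n], C ∈ S, n ≥ 0}`. -/
def plusClass (S : Set C) : Set C :=
  {X | ∃ Y ∈ S, ∃ n : ℕ, Nonempty (X ≅ Y⟦(n : ℤ)⟧)}

/-- `S[-] = {X | X ≅ C[n], C ∈ S, n ≤ 0}`. -/
def minusClass (S : Set C) : Set C :=
  {X | ∃ Y ∈ S, ∃ n : ℕ, Nonempty (X ≅ Y⟦(-(n : ℤ))⟧)}

/-- `f` factors through an object of `add ω`. -/
def FactorsThruAdd (ω : Set C) {X Y : C} (f : X ⟶ Y) : Prop :=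
  ∃ (M : C) (g : X ⟶ M) (h : M ⟶ Y), AddCat ω M ∧ g ≫ h = f

/-- The `ω`-Gorenstein objects: `G_ω = ωX ∩ X_ω`. -/
def Gor (ω : Set C) : Set C := coAuslander ω ∩ Auslander ω


end RelSing

open RelSing

variable {C : Type u} [Category.{v} C] [Preadditive C] [HasZeroObject C]
  [HasShift C ℤ] [∀ n : ℤ, (shiftFunctor C n).Additive] [Pretriangulated C]

namespace RelSingAux

open ZeroObject

variable {ω : Set C}

lemma isZero_shift {X : C} (hX : IsZero X) (n : ℤ) : IsZero (X⟦n⟧) :=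
  (shiftFunctor C n).map_isZero hX

/-- Maps from an object of `⊥ω` to positive shifts of objects of `add ω` vanish. -/
lemma hom_zero_target {Z A : C} (hZ : Z ∈ leftPerp ω) (hA : AddCat ω A)
    (i : ℤ) (hi : 0 < i) (f : Z ⟶ A⟦i⟧) : f = 0 := by
  induction hA with
  | of hX => exact hZ _ hX i hi f
  | zero hX => exact (isZero_shift hX i).eq_of_tgt f 0
  | sum i₁ i₂ p₁ p₂ h₁ h₂ h₁₂ h₂₁ hZZ hX hY ihX ihY =>
      have : f ≫ (shiftFunctor C i).map (𝟙 _) = f := by simp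
      rw [← this, ← hZZ, Functor.map_add, Preadditive.comp_add,
        Functor.map_comp, Functor.map_comp, ← Category.assoc, ← Category.assoc,
        ihX (f ≫ (shiftFunctor C i).map p₁), ihY (f ≫ (shiftFunctor C i).map p₂)]
      simp
  | retract j r hir hY ihY =>
      have : f ≫ (shiftFunctor C i).map (𝟙 _) = f := by simp
      rw [← this, ← hir, Functor.map_comp, ← Category.assoc,
        ihY (f ≫ (shiftFunctor C i).map j)]
      simp

/-- Maps from positive shifts out of objects of `add ω` into `ω⊥`-objects vanish. -/
lemma hom_zero_source {Z A : C} (hZ : Z ∈ rightPerp ω) (hA : AddCat ω A)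
    (i : ℤ) (hi : 0 < i) (f : A ⟶ Z⟦i⟧) : f = 0 := by
  induction hA with
  | of hX => exact hZ _ hX i hi f
  | zero hX => exact hX.eq_of_src f 0
  | sum i₁ i₂ p₁ p₂ h₁ h₂ h₁₂ h₂₁ hZZ hX hY ihX ihY =>
      have : 𝟙 _ ≫ f = f := by simp
      rw [← this, ← hZZ, Preadditive.add_comp, Category.assoc, Category.assoc,
        ihX (i₁ ≫ f), ihY (i₂ ≫ f)]
      simp
  | retract j r hir hY ihY =>
      have : 𝟙 _ ≫ f = f := by simp
      rw [← this, ← hir, Category.assoc, ihY (r ≫ f)]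
      simp

lemma mem_rightPerp_of_mem (hω : SemiSelfOrth ω) {A : C} (hA : A ∈ ω) : A ∈ rightPerp ω :=
  fun M hM i hi f => hω M hM A hA i hi f

lemma mem_leftPerp_of_mem (hω : SemiSelfOrth ω) {A : C} (hA : A ∈ ω) : A ∈ leftPerp ω :=
  fun M hM i hi f => hω A hA M hM i hi f

lemma addCat_mem_leftPerp (hω : SemiSelfOrth ω) {A : C} (hA : AddCat ω A) : A ∈ leftPerp ω :=
  fun M hM i hi f => hom_zero_source (mem_rightPerp_of_mem hω hM) hA i hi f

lemma addCat_mem_rightPerp (hω : SemiSelfOrth ω) {A : C} (hA : AddCat ω A) : A ∈ rightPerp ω :=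
  fun M hM i hi f => hom_zero_target (mem_leftPerp_of_mem hω hM) hA i hi f

lemma zero_mem_leftPerp {Z : C} (hZ : IsZero Z) : Z ∈ leftPerp ω :=
  fun _ _ _ _ f => hZ.eq_of_src f 0

lemma zero_mem_rightPerp {Z : C} (hZ : IsZero Z) : Z ∈ rightPerp ω :=
  fun _ _ i _ f => (isZero_shift hZ i).eq_of_tgt f 0

/-- Vanishing of all homs transfers along shifts. -/
lemma shift_vanish {A B : C} (hv : ∀ f : A ⟶ B, f = 0) (j : ℤ) (f : A⟦j⟧ ⟶ B⟦j⟧) : f = 0 := by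
  have : f = (shiftFunctor C j).map ((shiftFunctor C j).preimage f) :=
    ((shiftFunctor C j).map_preimage f).symm
  rw [this, hv ((shiftFunctor C j).preimage f), Functor.map_zero]

lemma subset_genTriang {S : Set C} : S ⊆ genTriang S :=
  fun _ hA => Set.mem_sInter.2 fun _ hU => hU.1 hA

lemma genTriang_subset {S U : Set C} (hS : S ⊆ U) (hU : IsTriangulatedSub U) :
    genTriang S ⊆ U := fun _ hX => Set.mem_sInter.1 hX U ⟨hS, hU⟩

lemma isTriangulatedSub_genTriang {S : Set C} : IsTriangulatedSub (genTriang S) where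
  zero X hX := Set.mem_sInter.2 fun _ hU => hU.2.zero X hX
  iso e hX := Set.mem_sInter.2 fun U hU => hU.2.iso e (Set.mem_sInter.1 hX U hU)
  shift X hX n := Set.mem_sInter.2 fun U hU => hU.2.shift X (Set.mem_sInter.1 hX U hU) n
  ext₂ T hT h₁ h₃ := Set.mem_sInter.2 fun U hU =>
    hU.2.ext₂ T hT (Set.mem_sInter.1 h₁ U hU) (Set.mem_sInter.1 h₃ U hU)

/-- The class of objects `Y` such that `Hom(Z, Y⟦i⟧) = 0` for all `Z ∈ ⊥ω` and
all sufficiently large `i`. -/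
def EvVanish (ω : Set C) : Set C :=
  {Y | ∃ N : ℕ, ∀ Z ∈ leftPerp ω, ∀ i : ℤ, (N : ℤ) ≤ i → ∀ f : Z ⟶ Y⟦i⟧, f = 0}

lemma addCat_subset_evVanish : {A : C | AddCat ω A} ⊆ EvVanish ω := by
  intro A hA
  exact ⟨1, fun Z hZ i hi f => hom_zero_target hZ hA i (by exact_mod_cast lt_of_lt_of_le one_pos hi) f⟩

lemma isTriangulatedSub_evVanish : IsTriangulatedSub (EvVanish ω) where
  zero X hX := ⟨0, fun Z hZ i _ f => (isZero_shift hX i).eq_of_tgt f 0⟩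
  iso := by
    rintro X Y e ⟨N, hN⟩
    refine ⟨N, fun Z hZ i hi f => ?_⟩
    have h0 : f ≫ (shiftFunctor C i).map e.inv = 0 := hN Z hZ i hi _
    have : f = (f ≫ (shiftFunctor C i).map e.inv) ≫ (shiftFunctor C i).map e.hom := by simp
    rw [this, h0, Limits.zero_comp]
  shift := by
    rintro X ⟨N, hN⟩ n
    refine ⟨(N - n).toNat, fun Z hZ i hi f => ?_⟩
    have hni : (N : ℤ) ≤ n + i := by omega
    have h0 : f ≫ (shiftFunctorAdd' C n i (n + i) rfl).inv.app X = 0 :=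
      hN Z hZ (n + i) hni _
    have : f = (f ≫ (shiftFunctorAdd' C n i (n + i) rfl).inv.app X) ≫
        (shiftFunctorAdd' C n i (n + i) rfl).hom.app X := by simp
    rw [this, h0, Limits.zero_comp]
  ext₂ := by
    rintro T hT ⟨N₁, hN₁⟩ ⟨N₃, hN₃⟩
    refine ⟨max N₁ N₃, fun Z hZ i hi f => ?_⟩
    have hi₁ : (N₁ : ℤ) ≤ i := by
      have := le_max_left N₁ N₃; omega
    have hi₃ : (N₃ : ℤ) ≤ i := by
      have := le_max_right N₁ N₃; omega
    have hTsh := Triangle.shift_distinguished T hT i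
    set Tsh := (CategoryTheory.shiftFunctor (Triangle C) i).obj T with hTshdef
    have h2 : f ≫ Tsh.mor₂ = 0 := hN₃ Z hZ i hi₃ (f ≫ Tsh.mor₂)
    obtain ⟨g, hg⟩ := Triangle.coyoneda_exact₂ Tsh hTsh f h2
    have hg0 : g = 0 := hN₁ Z hZ i hi₁ g
    rw [hg, hg0]; exact Limits.zero_comp

/-- Key vanishing: if `X` is in the Auslander class, `Y ∈ ω⊥`, and homs from `⊥ω`-objects
into large shifts of `Y` vanish, then `Hom(X, Y⟦1⟧) = 0`. -/
lemma key_vanish {X Y : C} (hX : X ∈ Auslander ω) (hY : Y ∈ rightPerp ω)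
    (N : ℕ) (hN : ∀ Z ∈ leftPerp ω, ∀ i : ℤ, (N : ℤ) ≤ i → ∀ f : Z ⟶ Y⟦i⟧, f = 0)
    (u : X ⟶ Y⟦(1 : ℤ)⟧) : u = 0 := by
  obtain ⟨T, M, f, g, h, hT0, hdist, hM, hperp⟩ := hX
  subst hT0
  -- P k : all maps T k ⟶ Y⟦k+1⟧ vanish
  set P : ℕ → Prop := fun k => ∀ ψ : T k ⟶ Y⟦(k : ℤ) + 1⟧, ψ = 0 with hPdef
  have base : ∀ k, N ≤ k → P k := by
    intro k hk ψ
    exact hN (T k) (hperp k) ((k : ℤ) + 1) (by omega) ψ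
  have step : ∀ k, P (k + 1) → P k := by
    intro k hPk1 ψ
    -- iso Y⟦(k+1)+1⟧ ≅ Y⟦k+1⟧⟦1⟧
    have hc : ((k : ℤ) + 1) + 1 = (((k + 1 : ℕ)) : ℤ) + 1 := by push_cast; ring
    set E := shiftFunctorAdd' C ((k : ℤ) + 1) 1 ((((k + 1 : ℕ)) : ℤ) + 1) hc with hEdef
    -- all maps T (k+1) ⟶ Y⟦k+1⟧⟦1⟧ vanish
    have hT1 : ∀ v : T (k + 1) ⟶ (Y⟦(k : ℤ) + 1⟧)⟦(1 : ℤ)⟧, v = 0 := by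
      intro v
      have h0 : v ≫ E.inv.app Y = 0 := hPk1 (v ≫ E.inv.app Y)
      have : v = (v ≫ E.inv.app Y) ≫ E.hom.app Y := by simp
      rw [this, h0, Limits.zero_comp]
    -- all maps (M k)⟦1⟧ ⟶ Y⟦k+1⟧⟦1⟧ vanish
    have hM1 : ∀ v : (M k)⟦(1 : ℤ)⟧ ⟶ (Y⟦(k : ℤ) + 1⟧)⟦(1 : ℤ)⟧, v = 0 :=
      shift_vanish (fun w => hom_zero_source hY (hM k) ((k : ℤ) + 1) (by omega) w) 1
    -- double rotation of the triangle T k → M k → T (k+1)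
    have hT2 := rot_of_distTriang _ (rot_of_distTriang _ (hdist k))
    set T2 := (Triangle.mk (f k) (g k) (h k)).rotate.rotate with hT2def
    have hφ0 : T2.mor₁ ≫ (shiftFunctor C (1 : ℤ)).map ψ = 0 :=
      hT1 (T2.mor₁ ≫ (shiftFunctor C (1 : ℤ)).map ψ)
    obtain ⟨w, hw⟩ := Triangle.yoneda_exact₂ T2 hT2 ((shiftFunctor C (1 : ℤ)).map ψ) hφ0
    have hw0 : w = 0 := hM1 w
    have : (shiftFunctor C (1 : ℤ)).map ψ = 0 := by
      exact hw.trans (by rw [hw0]; exact Limits.comp_zero)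
    exact (shiftFunctor C (1 : ℤ)).map_injective (by rw [this]; simp)
  have down : ∀ j : ℕ, P (N - j) := by
    intro j
    induction j with
    | zero => exact base N (by omega) -- N - 0 = N
    | succ j ih =>
        by_cases hj : N ≤ j
        · have : N - (j + 1) = N - j := by omega
          rw [this]; exact ih
        · have heq : N - (j + 1) + 1 = N - j := by omega
          exact step (N - (j + 1)) (heq ▸ ih)
  have hP0 : P 0 := by
    have := down N
    rwa [Nat.sub_self] at this
  have h01 : ((0 : ℕ) : ℤ) + 1 = (1 : ℤ) := by norm_num
  rw [hPdef] at hP0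
  rw [h01] at hP0
  exact hP0 u

/-- Every object of `add ω` is in the Auslander class. -/
lemma addCat_mem_auslander (hω : SemiSelfOrth ω) {A : C} (hA : AddCat ω A) :
    A ∈ Auslander ω := by
  refine ⟨fun n => match n with | 0 => A | _ + 1 => 0,
    fun n => match n with | 0 => A | _ + 1 => 0,
    fun n => 𝟙 _, fun n => 0, fun n => 0, rfl, fun i => ?_, fun i => ?_, fun i => ?_⟩
  · exact contractible_distinguished _
  · match i with
    | 0 => exact hA
    | _ + 1 => exact AddCat.zero (isZero_zero C)
  · match i with
    | 0 => exact addCat_mem_leftPerp hω hA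
    | _ + 1 => exact zero_mem_leftPerp (isZero_zero C)

/-- Every object of `add ω` is in the co-Auslander class. -/
lemma addCat_mem_coAuslander (hω : SemiSelfOrth ω) {A : C} (hA : AddCat ω A) :
    A ∈ coAuslander ω := by
  refine ⟨fun n => match n with | 0 => A | _ + 1 => 0,
    fun n => match n with | 0 => A | _ + 1 => 0,
    fun n => 0, fun n => 𝟙 _, fun n => 0, rfl, fun i => ?_, fun i => ?_, fun i => ?_⟩
  · exact contractible_distinguished₁ _
  · match i with
    | 0 => exact hA
    | _ + 1 => exact AddCat.zero (isZero_zero C)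
  · match i with
    | 0 => exact addCat_mem_rightPerp hω hA
    | _ + 1 => exact zero_mem_rightPerp (isZero_zero C)

end RelSingAux

open RelSingAux

/-- For a semi-selforthogonal `ω`, `G_ω ∩ ⟨add ω⟩ = add ω`. -/
theorem stmt10 (ω : Set C) (hω : SemiSelfOrth ω) :
    Gor ω ∩ genTriang {A | AddCat ω A} = {A | AddCat ω A} := by
  ext A
  constructor
  · rintro ⟨⟨hco, haus⟩, hgen⟩
    obtain ⟨T, M, f, g, h, hT0, hdist, hM, hperp⟩ := hco
    subst hT0
    -- T 1 belongs to the generated triangulated subcategory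
    have hgen' : IsTriangulatedSub (genTriang {A : C | AddCat ω A}) :=
      isTriangulatedSub_genTriang
    have hT1gen : T 1 ∈ genTriang {A : C | AddCat ω A} := by
      have hrot := inv_rot_of_distTriang _ (hdist 0)
      exact hgen'.ext₂ _ hrot (hgen'.shift _ hgen (-1)) (subset_genTriang (hM 0))
    -- so eventual vanishing holds for T 1
    obtain ⟨N, hN⟩ : T 1 ∈ EvVanish ω :=
      genTriang_subset addCat_subset_evVanish isTriangulatedSub_evVanish hT1gen
    -- hence Hom(T 0, (T 1)⟦1⟧) = 0, in particular h 0 = 0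
    have hh0 : h 0 = 0 := key_vanish haus (hperp 1) N hN (h 0)
    -- the triangle T 1 → M 0 → T 0 splits
    obtain ⟨s, hs⟩ := Triangle.coyoneda_exact₃ _ (hdist 0) (𝟙 (T 0))
      (by rw [hh0]; exact Limits.comp_zero)
    exact AddCat.retract s (g 0) hs.symm (hM 0)
  · intro hA
    exact ⟨⟨addCat_mem_coAuslander hω hA, addCat_mem_auslander hω hA⟩,
      subset_genTriang hA⟩
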